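/- For every q ∈ [1,∞) there exists a positive constant C_q such that for all t ≥ 0, ‖∂_x w(t,·)‖_{L^q(ℝ)} ≤ C_q (1+t)^{−1+1/q} and ‖∂_x² w(t,·)‖_{L^q(ℝ)} ≤ C_q (1+t)^{−1}. Moreover there exists a positive constant C such that for all t ≥ 0, sup_{x∈ℝ} |∂_x w(t,x)| ≤ C(1+t)^{−1} and sup_{x∈ℝ} |∂_x² w(t,x)| ≤ C(1+t)^{−1}. -/

import Mathlib

open Real MeasureTheory Filter Set
open scoped ENNReal NNReal


lemma lintegral_abs_le_of_intervals (h : ℝ → ℝ) (hc : Continuous h) (c M : ℝ)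
    (hM : ∀ n : ℕ, ∫ x in (c - n)..(c + n), |h x| ≤ M) :
    ∫⁻ x, ENNReal.ofReal |h x| ≤ ENNReal.ofReal M := by
  set φ : ℕ → ℝ → ℝ≥0∞ := fun n => (Ioc (c - n) (c + n)).indicator (fun x => ENNReal.ofReal |h x|)
    with hφ
  have hmeas : Measurable fun x => ENNReal.ofReal |h x| :=
    ENNReal.measurable_ofReal.comp (hc.abs.measurable)
  have hmono : Monotone φ := by
    intro m n hmn
    apply Set.indicator_le_indicator_of_subset
    · apply Ioc_subset_Ioc
      · have : (m:ℝ) ≤ n := Nat.cast_le.mpr hmn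
        linarith
      · have : (m:ℝ) ≤ n := Nat.cast_le.mpr hmn
        linarith
    · intro x; exact zero_le
  have hsup : ∀ x, (⨆ n, φ n x) = ENNReal.ofReal |h x| := by
    intro x
    apply le_antisymm
    · exact iSup_le fun n => Set.indicator_le_self _ _ x
    · obtain ⟨n, hn⟩ := exists_nat_gt (|x| + |c|)
      have hx1 : c - n < x := by
        have h1 : |x| + |c| < n := hn
        have := abs_le.mp (le_refl |x|)
        have := neg_abs_le x
        have := neg_abs_le c
        have := le_abs_self c
        linarith
      have hx2 : x ≤ c + n := by
        have h1 : |x| + |c| < n := hn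
        have := le_abs_self x
        have := neg_abs_le c
        linarith
      have hmem : x ∈ Ioc (c - (n:ℝ)) (c + n) := ⟨hx1, hx2⟩
      calc ENNReal.ofReal |h x| = φ n x := by
            rw [hφ]; exact (Set.indicator_of_mem hmem (fun x => ENNReal.ofReal |h x|)).symm
        _ ≤ ⨆ n, φ n x := le_iSup (fun n => φ n x) n
  calc ∫⁻ x, ENNReal.ofReal |h x| = ∫⁻ x, ⨆ n, φ n x := by simp_rw [hsup]
    _ = ⨆ n, ∫⁻ x, φ n x := lintegral_iSup
        (fun n => hmeas.indicator measurableSet_Ioc) hmono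
    _ ≤ ENNReal.ofReal M := by
        apply iSup_le
        intro n
        have hn0 : c - (n:ℝ) ≤ c + n := by
          have : (0:ℝ) ≤ n := Nat.cast_nonneg n
          linarith
        have hint : IntegrableOn (fun x => |h x|) (Ioc (c - n) (c + n)) volume :=
          (hc.abs.integrableOn_Icc).mono_set Ioc_subset_Icc_self
        rw [hφ]
        simp only
        rw [lintegral_indicator measurableSet_Ioc]
        rw [← ofReal_integral_eq_lintegral_ofReal hint
          (Eventually.of_forall fun x => abs_nonneg _)]
        apply ENNReal.ofReal_le_ofReal
        rw [← intervalIntegral.integral_of_le hn0]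
        exact hM n

lemma eLpNorm_interp (h : ℝ → ℝ) (hc : Continuous h) (M I q : ℝ) (hM0 : 0 ≤ M) (hI0 : 0 ≤ I)
    (hq : 1 ≤ q) (hb : ∀ x, |h x| ≤ M)
    (hI : ∫⁻ x, ENNReal.ofReal |h x| ≤ ENNReal.ofReal I) :
    eLpNorm h (ENNReal.ofReal q) volume ≤ ENNReal.ofReal (M ^ (1 - 1/q) * I ^ (1/q)) := by
  have hq0 : 0 < q := lt_of_lt_of_le one_pos hq
  have hp0 : ENNReal.ofReal q ≠ 0 := by
    simp only [ne_eq, ENNReal.ofReal_eq_zero, not_le]; linarith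
  rw [eLpNorm_eq_lintegral_rpow_enorm_toReal hp0 ENNReal.ofReal_ne_top,
    ENNReal.toReal_ofReal hq0.le]
  have hcoe : ∀ x : ℝ, ((‖x‖₊ : ℝ≥0∞)) = ENNReal.ofReal |x| := by
    intro x
    rw [← enorm_eq_nnnorm, ← ofReal_norm, Real.norm_eq_abs]
  have key : ∀ x, ((‖h x‖₊ : ℝ≥0∞)) ^ q ≤ ENNReal.ofReal M ^ (q - 1) * (‖h x‖₊ : ℝ≥0∞) := by
    intro x
    have hle : ((‖h x‖₊ : ℝ≥0∞)) ≤ ENNReal.ofReal M := by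
      rw [hcoe]; exact ENNReal.ofReal_le_ofReal (hb x)
    calc ((‖h x‖₊ : ℝ≥0∞)) ^ q = ((‖h x‖₊ : ℝ≥0∞)) ^ (q - 1) * ((‖h x‖₊ : ℝ≥0∞)) ^ (1:ℝ) := by
          rw [← ENNReal.rpow_add_of_nonneg _ _ (by linarith) zero_le_one]
          norm_num
      _ ≤ ENNReal.ofReal M ^ (q - 1) * ((‖h x‖₊ : ℝ≥0∞)) := by
          rw [ENNReal.rpow_one]
          exact mul_le_mul_left (ENNReal.rpow_le_rpow hle (by linarith)) _
  have step1 : ∫⁻ x, ((‖h x‖₊ : ℝ≥0∞)) ^ q ≤ ENNReal.ofReal M ^ (q - 1) * ENNReal.ofReal I := by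
    calc ∫⁻ x, ((‖h x‖₊ : ℝ≥0∞)) ^ q ≤ ∫⁻ x, ENNReal.ofReal M ^ (q - 1) * (‖h x‖₊ : ℝ≥0∞) :=
          lintegral_mono key
      _ = ENNReal.ofReal M ^ (q - 1) * ∫⁻ x, ((‖h x‖₊ : ℝ≥0∞)) :=
          lintegral_const_mul _ hc.measurable.nnnorm.coe_nnreal_ennreal
      _ ≤ ENNReal.ofReal M ^ (q - 1) * ENNReal.ofReal I := by
          apply mul_le_mul_right
          calc ∫⁻ x, ((‖h x‖₊ : ℝ≥0∞)) = ∫⁻ x, ENNReal.ofReal |h x| := by simp_rw [hcoe]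
            _ ≤ ENNReal.ofReal I := hI
  calc (∫⁻ x, ((‖h x‖₊ : ℝ≥0∞)) ^ q) ^ (1/q)
      ≤ (ENNReal.ofReal M ^ (q - 1) * ENNReal.ofReal I) ^ (1/q) :=
        ENNReal.rpow_le_rpow step1 (by positivity)
    _ = ENNReal.ofReal (M ^ (1 - 1/q) * I ^ (1/q)) := by
        rw [ENNReal.mul_rpow_of_nonneg _ _ (by positivity : (0:ℝ) ≤ 1/q)]
        rw [← ENNReal.rpow_mul]
        have he : (q - 1) * (1/q) = 1 - 1/q := by field_simp
        rw [he]
        have hθ : (0:ℝ) ≤ 1 - 1/q := by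
          have : 1/q ≤ 1 := by
            rw [div_le_one hq0]; exact hq
          linarith
        rw [ENNReal.ofReal_rpow_of_nonneg hM0 hθ,
          ENNReal.ofReal_rpow_of_nonneg hI0 (by positivity : (0:ℝ) ≤ 1/q),
          ← ENNReal.ofReal_mul (by positivity)]


/-- The smooth monotone initial datum `w₀(x) = (w₋+w₊)/2 + ((w₊−w₋)/2)·tanh x`. -/
noncomputable def w0 (wm wp x : ℝ) : ℝ := (wm + wp) / 2 + ((wp - wm) / 2) * Real.tanh x

noncomputable def uu (y : ℝ) : ℝ := (Real.cosh y ^ 2)⁻¹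
noncomputable def vv (y : ℝ) : ℝ := -(2 * Real.sinh y * Real.cosh y) / (Real.cosh y ^ 2) ^ 2

lemma uu_pos (y : ℝ) : 0 < uu y := by
  have := Real.cosh_pos y; unfold uu; positivity

lemma uu_le_one (y : ℝ) : uu y ≤ 1 := by
  have h := Real.one_le_cosh y
  have : (1:ℝ) ≤ Real.cosh y ^ 2 := by nlinarith
  unfold uu
  rw [inv_le_one_iff₀]; right; exact this

lemma abs_sinh_le_cosh (y : ℝ) : |Real.sinh y| ≤ Real.cosh y := by
  have h := Real.cosh_sq_sub_sinh_sq y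
  have hc := Real.cosh_pos y
  rcases abs_cases (Real.sinh y) with ⟨he, _⟩ | ⟨he, _⟩ <;> nlinarith

lemma abs_vv_le (y : ℝ) : |vv y| ≤ 2 * uu y := by
  have hc := Real.cosh_pos y
  have hs := abs_sinh_le_cosh y
  unfold vv uu
  rw [abs_div, abs_neg]
  rw [abs_of_pos (by positivity : (0:ℝ) < (Real.cosh y ^ 2) ^ 2)]
  rw [div_le_iff₀ (by positivity)]
  have : |2 * Real.sinh y * Real.cosh y| = 2 * |Real.sinh y| * Real.cosh y := by
    rw [abs_mul, abs_mul, abs_two, abs_of_pos hc]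
  rw [this]
  have h2 : (2:ℝ) * (Real.cosh y^2)⁻¹ * ((Real.cosh y^2)^2) = 2 * Real.cosh y * Real.cosh y := by
    field_simp
  nlinarith

lemma vv_nonneg {y : ℝ} (hy : y ≤ 0) : 0 ≤ vv y := by
  have hs : Real.sinh y ≤ 0 := by
    have := Real.sinh_le_sinh.mpr hy; simpa using this
  have hc := Real.cosh_pos y
  unfold vv
  apply div_nonneg _ (by positivity)
  nlinarith

lemma vv_nonpos {y : ℝ} (hy : 0 ≤ y) : vv y ≤ 0 := by
  have hs : 0 ≤ Real.sinh y := by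
    have := Real.sinh_le_sinh.mpr hy; simpa using this
  have hc := Real.cosh_pos y
  unfold vv
  apply div_nonpos_of_nonpos_of_nonneg _ (by positivity)
  nlinarith

lemma hasDerivAt_tanh (y : ℝ) : HasDerivAt Real.tanh (uu y) y := by
  have hc := Real.cosh_pos y
  have h := ((Real.hasDerivAt_sinh y).div (Real.hasDerivAt_cosh y) hc.ne')
  have heq : (Real.cosh y * Real.cosh y - Real.sinh y * Real.sinh y) / Real.cosh y ^ 2 = uu y := by
    have := Real.cosh_sq_sub_sinh_sq y
    unfold uu
    rw [show Real.cosh y * Real.cosh y - Real.sinh y * Real.sinh y = Real.cosh y ^2 - Real.sinh y ^2 by ring, this]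
    field_simp
  rw [heq] at h
  rw [show Real.tanh = Real.sinh / Real.cosh from funext Real.tanh_eq_sinh_div_cosh]
  exact h

lemma hasDerivAt_uu (y : ℝ) : HasDerivAt uu (vv y) y := by
  have hc := Real.cosh_pos y
  have h : HasDerivAt (fun x => Real.cosh x ^ 2) (2 * Real.cosh y ^ 1 * Real.sinh y) y :=
    (Real.hasDerivAt_cosh y).pow 2
  have h2 := h.inv (by positivity)
  refine h2.congr_deriv ?_
  unfold vv
  ring

lemma continuous_uu : Continuous uu := by
  unfold uu
  exact (Real.continuous_cosh.pow 2).inv₀ (fun y => (pow_pos (Real.cosh_pos y) 2).ne')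

lemma continuous_vv : Continuous vv := by
  unfold vv
  apply Continuous.div
  · continuity
  · continuity
  · intro y; have := Real.cosh_pos y; positivity

lemma hasDerivAt_w0 (wm wp y : ℝ) : HasDerivAt (w0 wm wp) ((wp - wm)/2 * uu y) y := by
  unfold w0
  exact ((hasDerivAt_tanh y).const_mul ((wp - wm)/2)).const_add _

lemma w0_mono (wm wp : ℝ) (hw : wm < wp) : StrictMono (w0 wm wp) := by
  apply strictMono_of_deriv_pos
  intro x
  rw [(hasDerivAt_w0 wm wp x).deriv]
  have := uu_pos x
  have : 0 < (wp - wm)/2 := by linarith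
  positivity

lemma w0_lt (wm wp : ℝ) (hw : wm < wp) (y : ℝ) : wm < w0 wm wp y ∧ w0 wm wp y < wp := by
  have hc := Real.cosh_pos y
  have hs := Real.cosh_sq_sub_sinh_sq y
  have h1 : |Real.sinh y| < Real.cosh y := by
    rcases abs_cases (Real.sinh y) with ⟨he, _⟩ | ⟨he, _⟩ <;> nlinarith
  have ht : |Real.tanh y| < 1 := by
    rw [Real.tanh_eq_sinh_div_cosh, abs_div, abs_of_pos hc, div_lt_one hc]
    exact h1
  rw [abs_lt] at ht
  unfold w0
  constructor <;> nlinarith [ht.1, ht.2]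

section
variable {wm wp t : ℝ} (hw : wm < wp) (ht : 0 ≤ t) {Y : ℝ → ℝ}
  (hYe : ∀ x, Y x + t * w0 wm wp (Y x) = x)

/-- the forward map -/
noncomputable def FF (wm wp t y : ℝ) : ℝ := y + t * w0 wm wp y

noncomputable def DF (wm wp t y : ℝ) : ℝ := 1 + t * ((wp - wm)/2 * uu y)

include hw ht in
lemma FF_mono : StrictMono (FF wm wp t) := by
  intro y1 y2 h
  have := w0_mono wm wp hw h
  have h2 : t * w0 wm wp y1 ≤ t * w0 wm wp y2 := by nlinarith
  unfold FF; linarith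

include hYe in
lemma FF_Y (x : ℝ) : FF wm wp t (Y x) = x := hYe x

include hw ht hYe in
lemma Y_mono : Monotone Y := by
  intro x1 x2 h
  by_contra hc
  push_neg at hc
  have := FF_mono hw ht hc
  rw [FF_Y hYe, FF_Y hYe] at this
  linarith

include hw ht hYe in
lemma Y_lip : LipschitzWith 1 Y := by
  apply LipschitzWith.of_dist_le_mul
  intro x1 x2
  rw [Real.dist_eq, Real.dist_eq]
  simp only [NNReal.coe_one, one_mul]
  rcases le_total x1 x2 with h | h
  · have hm := Y_mono hw ht hYe h
    have hw0 : w0 wm wp (Y x1) ≤ w0 wm wp (Y x2) := (w0_mono wm wp hw).monotone hm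
    have e1 := hYe x1; have e2 := hYe x2
    rw [abs_of_nonpos (by linarith), abs_of_nonpos (by linarith)]
    nlinarith
  · have hm := Y_mono hw ht hYe h
    have hw0 : w0 wm wp (Y x2) ≤ w0 wm wp (Y x1) := (w0_mono wm wp hw).monotone hm
    have e1 := hYe x1; have e2 := hYe x2
    rw [abs_of_nonneg (by linarith), abs_of_nonneg (by linarith)]
    nlinarith

include hw ht in
lemma DF_ge_one (y : ℝ) : 1 ≤ DF wm wp t y := by
  have h1 := uu_pos y
  have h2 : 0 < (wp - wm)/2 := by linarith
  have h3 : 0 ≤ t * ((wp - wm)/2 * uu y) := mul_nonneg ht (by positivity)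
  unfold DF; linarith

omit hw ht in
lemma hasDerivAt_FF (y : ℝ) : HasDerivAt (FF wm wp t) (DF wm wp t y) y := by
  unfold FF DF

  exact (hasDerivAt_id y).add ((hasDerivAt_w0 wm wp y).const_mul t)

include hw ht hYe in
lemma hasDerivAt_Y (x : ℝ) : HasDerivAt Y ((DF wm wp t (Y x))⁻¹) x := by
  have hpos : (0:ℝ) < DF wm wp t (Y x) := lt_of_lt_of_le one_pos (DF_ge_one hw ht _)
  exact HasDerivAt.of_local_left_inverse ((Y_lip hw ht hYe).continuous.continuousAt)
    (hasDerivAt_FF (Y x)) hpos.ne' (Eventually.of_forall (FF_Y hYe))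


noncomputable def g0 (wm wp t y : ℝ) : ℝ := (wp - wm)/2 * uu y / DF wm wp t y
noncomputable def Dg0 (wm wp t y : ℝ) : ℝ := (wp - wm)/2 * vv y / (DF wm wp t y)^2

include hw ht in
lemma DF_pos (y : ℝ) : (0:ℝ) < DF wm wp t y := lt_of_lt_of_le one_pos (DF_ge_one hw ht y)

include hw ht in
lemma hasDerivAt_g0 (y : ℝ) : HasDerivAt (g0 wm wp t) (Dg0 wm wp t y) y := by
  have hD : HasDerivAt (DF wm wp t) (t * ((wp - wm)/2 * vv y)) y := by
    unfold DF
    exact (((hasDerivAt_uu y).const_mul ((wp - wm)/2)).const_mul t).const_add 1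
  have hN : HasDerivAt (fun z => (wp - wm)/2 * uu z) ((wp - wm)/2 * vv y) y :=
    (hasDerivAt_uu y).const_mul _
  have hDpos := DF_pos hw ht (y := y)
  have h := hN.div hD hDpos.ne'
  have hne : (1 + t * ((wp - wm)/2 * uu y)) ≠ 0 := by
    have := hDpos; unfold DF at this; linarith
  have hp : (0:ℝ) < 1 + t * ((wp - wm)/2 * uu y) := hDpos
  refine h.congr_deriv ?_
  unfold Dg0
  have hDe : DF wm wp t y = 1 + t * ((wp - wm)/2 * uu y) := rfl
  rw [hDe, div_eq_div_iff (pow_ne_zero 2 hp.ne') (pow_ne_zero 2 hp.ne')]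
  ring

include hw ht hYe in
lemma hasDerivAt_w (x : ℝ) : HasDerivAt (fun y => w0 wm wp (Y y)) (g0 wm wp t (Y x)) x := by
  have h := (hasDerivAt_w0 wm wp (Y x)).comp x (hasDerivAt_Y hw ht hYe x)
  rw [Function.comp_def] at h
  have he : g0 wm wp t (Y x) = (wp - wm)/2 * uu (Y x) * (DF wm wp t (Y x))⁻¹ := by
    unfold g0; rw [div_eq_mul_inv]
  rw [he]
  exact h

include hw ht hYe in
lemma deriv_w_eq : deriv (fun y => w0 wm wp (Y y)) = fun x => g0 wm wp t (Y x) :=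
  funext fun x => (hasDerivAt_w hw ht hYe x).deriv

include hw ht hYe in
lemma hasDerivAt_w1 (x : ℝ) : HasDerivAt (fun z => g0 wm wp t (Y z))
    (Dg0 wm wp t (Y x) * (DF wm wp t (Y x))⁻¹) x := by
  have h := (hasDerivAt_g0 hw ht (Y x)).comp x (hasDerivAt_Y hw ht hYe x)
  rw [Function.comp_def] at h
  exact h

include hw ht hYe in
lemma deriv_w1_eq : deriv (fun z => g0 wm wp t (Y z))
    = fun x => Dg0 wm wp t (Y x) * (DF wm wp t (Y x))⁻¹ :=
  funext fun x => (hasDerivAt_w1 hw ht hYe x).deriv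

lemma aux_frac {s a K t : ℝ} (hs0 : 0 ≤ s) (hsa : s ≤ a) (haK : a ≤ K) (hK1 : 1 ≤ K)
    (ht : 0 ≤ t) : s / (1 + t*s) ≤ K / (1+t) := by
  have hd1 : (0:ℝ) < 1 + t*s := by nlinarith
  have hd2 : (0:ℝ) < 1 + t := by linarith
  rw [div_le_div_iff₀ hd1 hd2]
  nlinarith [mul_nonneg (mul_nonneg (by linarith : (0:ℝ) ≤ K - 1) ht) hs0]

include hw ht in
lemma g0_nonneg (y : ℝ) : 0 ≤ g0 wm wp t y := by
  have ha : (0:ℝ) < (wp - wm)/2 := by linarith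
  have := uu_pos y
  have := DF_pos hw ht (y := y)
  unfold g0; positivity

include hw ht in
lemma g0_le (y : ℝ) : g0 wm wp t y ≤ max ((wp - wm)/2) 1 / (1 + t) := by
  have ha : (0:ℝ) < (wp - wm)/2 := by linarith
  have hu := uu_pos y
  have hu1 := uu_le_one y
  have hKey : g0 wm wp t y = ((wp - wm)/2 * uu y) / (1 + t * ((wp - wm)/2 * uu y)) := by
    unfold g0 DF; ring_nf
  rw [hKey]
  exact aux_frac (a := (wp - wm)/2) (by positivity) (by nlinarith)
    (le_max_left _ _) (le_max_right _ _) ht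

include hw ht in
lemma abs_w2_le (y : ℝ) : |Dg0 wm wp t y * (DF wm wp t y)⁻¹|
    ≤ 2 * (max ((wp - wm)/2) 1 / (1 + t)) := by
  have ha : (0:ℝ) < (wp - wm)/2 := by linarith
  have hd1 := DF_ge_one hw ht (y := y)
  have hd0 := DF_pos hw ht (y := y)
  have hu := uu_pos y
  have hvv := abs_vv_le y
  set d := DF wm wp t y with hd
  have h1 : |Dg0 wm wp t y * d⁻¹| = (wp - wm)/2 * |vv y| / d^2 * d⁻¹ := by
    unfold Dg0
    rw [← hd, abs_mul, abs_div, abs_mul, abs_inv, abs_of_nonneg ha.le,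
      abs_of_nonneg (by positivity : (0:ℝ) ≤ d^2), abs_of_pos hd0]
  rw [h1]
  have h2 : (wp - wm)/2 * |vv y| / d^2 * d⁻¹ ≤ (wp - wm)/2 * (2 * uu y) / d^2 * d⁻¹ := by
    gcongr
  have h3 : (wp - wm)/2 * (2 * uu y) / d^2 * d⁻¹ = 2 * ((wp - wm)/2 * uu y) / (d^2 * d) := by
    field_simp
  have h4 : 2 * ((wp - wm)/2 * uu y) / (d^2 * d) ≤ 2 * ((wp - wm)/2 * uu y) / d := by
    apply div_le_div_of_nonneg_left (by nlinarith) hd0 (by nlinarith)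
  have h5 : 2 * ((wp - wm)/2 * uu y) / d = 2 * g0 wm wp t y := by
    unfold g0; rw [← hd]; ring
  have h6 := g0_le hw ht (y := y)
  calc (wp - wm)/2 * |vv y| / d^2 * d⁻¹ ≤ (wp - wm)/2 * (2 * uu y) / d^2 * d⁻¹ := h2
    _ = 2 * ((wp - wm)/2 * uu y) / (d^2 * d) := h3
    _ ≤ 2 * ((wp - wm)/2 * uu y) / d := h4
    _ = 2 * g0 wm wp t y := h5
    _ ≤ 2 * (max ((wp - wm)/2) 1 / (1 + t)) := by linarith

include hw ht in
lemma continuous_DF : Continuous (DF wm wp t) := by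
  unfold DF
  exact continuous_const.add (continuous_const.mul (continuous_const.mul continuous_uu))


include hw ht hYe in
lemma continuous_w1 : Continuous (fun x => g0 wm wp t (Y x)) := by
  have hg : Continuous (g0 wm wp t) := by
    unfold g0
    exact (continuous_const.mul continuous_uu).div (continuous_DF hw ht)
      (fun y => (DF_pos hw ht (y := y)).ne')
  exact hg.comp (Y_lip hw ht hYe).continuous

include hw ht hYe in
lemma continuous_w2 : Continuous (fun x => Dg0 wm wp t (Y x) * (DF wm wp t (Y x))⁻¹) := by
  have hg : Continuous (fun y => Dg0 wm wp t y * (DF wm wp t y)⁻¹) := by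
    apply Continuous.mul
    · unfold Dg0
      exact (continuous_const.mul continuous_vv).div ((continuous_DF hw ht).pow 2)
        (fun y => by have := DF_pos hw ht (y := y); positivity)
    · exact ((continuous_DF hw ht).inv₀ (fun y => (DF_pos hw ht (y := y)).ne'))
  exact hg.comp (Y_lip hw ht hYe).continuous

include hw ht hYe in
lemma integral_w1 (p r : ℝ) : ∫ x in p..r, g0 wm wp t (Y x)
    = w0 wm wp (Y r) - w0 wm wp (Y p) :=
  intervalIntegral.integral_eq_sub_of_hasDerivAt (fun x _ => hasDerivAt_w hw ht hYe x)
    ((continuous_w1 hw ht hYe).intervalIntegrable _ _)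

include hw ht hYe in
lemma integral_w2 (p r : ℝ) : ∫ x in p..r, Dg0 wm wp t (Y x) * (DF wm wp t (Y x))⁻¹
    = g0 wm wp t (Y r) - g0 wm wp t (Y p) :=
  intervalIntegral.integral_eq_sub_of_hasDerivAt (fun x _ => hasDerivAt_w1 hw ht hYe x)
    ((continuous_w2 hw ht hYe).intervalIntegrable _ _)

include hw ht hYe in
lemma lint_w1 : ∫⁻ x, ENNReal.ofReal |g0 wm wp t (Y x)| ≤ ENNReal.ofReal (wp - wm) := by
  apply lintegral_abs_le_of_intervals _ (continuous_w1 hw ht hYe) 0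
  intro n
  have habs : ∀ x : ℝ, |g0 wm wp t (Y x)| = g0 wm wp t (Y x) :=
    fun x => abs_of_nonneg (g0_nonneg hw ht _)
  simp_rw [habs]
  rw [integral_w1 hw ht hYe]
  have h1 := (w0_lt wm wp hw (Y ((0:ℝ) + n))).2
  have h2 := (w0_lt wm wp hw (Y ((0:ℝ) - n))).1
  linarith

include hw ht hYe in
lemma lint_w2 : ∫⁻ x, ENNReal.ofReal |Dg0 wm wp t (Y x) * (DF wm wp t (Y x))⁻¹|
    ≤ ENNReal.ofReal (2 * (max ((wp - wm)/2) 1 / (1 + t))) := by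
  have ha : (0:ℝ) < (wp - wm)/2 := by linarith
  set c := t * w0 wm wp 0 with hc
  have hYc : Y c = 0 := by
    apply (FF_mono hw ht).injective
    rw [FF_Y hYe]
    unfold FF
    rw [hc]; ring
  apply lintegral_abs_le_of_intervals _ (continuous_w2 hw ht hYe) c
  intro n
  have hn0 : (0:ℝ) ≤ n := Nat.cast_nonneg n
  have hii1 : IntervalIntegrable (fun x => |Dg0 wm wp t (Y x) * (DF wm wp t (Y x))⁻¹|)
      volume (c - n) c := ((continuous_w2 hw ht hYe).abs.intervalIntegrable _ _)
  have hii2 : IntervalIntegrable (fun x => |Dg0 wm wp t (Y x) * (DF wm wp t (Y x))⁻¹|)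
      volume c (c + n) := ((continuous_w2 hw ht hYe).abs.intervalIntegrable _ _)
  rw [← intervalIntegral.integral_add_adjacent_intervals hii1 hii2]
  have e1 : ∫ x in (c - n)..c, |Dg0 wm wp t (Y x) * (DF wm wp t (Y x))⁻¹|
      = g0 wm wp t (Y c) - g0 wm wp t (Y (c - n)) := by
    rw [← integral_w2 hw ht hYe]
    apply intervalIntegral.integral_congr
    intro x hx
    rw [uIcc_of_le (by linarith : c - (n:ℝ) ≤ c)] at hx
    have hYx : Y x ≤ 0 := by
      rw [← hYc]; exact Y_mono hw ht hYe hx.2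
    have hvv := vv_nonneg hYx
    have hdp := DF_pos hw ht (y := Y x)
    have : 0 ≤ Dg0 wm wp t (Y x) * (DF wm wp t (Y x))⁻¹ := by
      unfold Dg0; positivity
    exact abs_of_nonneg this
  have e2 : ∫ x in c..(c + n), |Dg0 wm wp t (Y x) * (DF wm wp t (Y x))⁻¹|
      = g0 wm wp t (Y c) - g0 wm wp t (Y (c + n)) := by
    have hcongr : ∫ x in c..(c + n), |Dg0 wm wp t (Y x) * (DF wm wp t (Y x))⁻¹|
        = ∫ x in c..(c + n), -(Dg0 wm wp t (Y x) * (DF wm wp t (Y x))⁻¹) := by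
      apply intervalIntegral.integral_congr
      intro x hx
      rw [uIcc_of_le (by linarith : c ≤ c + (n:ℝ))] at hx
      have hYx : 0 ≤ Y x := by
        rw [← hYc]; exact Y_mono hw ht hYe hx.1
      have hvv := vv_nonpos hYx
      have hdp := DF_pos hw ht (y := Y x)
      have hle : Dg0 wm wp t (Y x) * (DF wm wp t (Y x))⁻¹ ≤ 0 := by
        apply mul_nonpos_of_nonpos_of_nonneg
        · unfold Dg0
          apply div_nonpos_of_nonpos_of_nonneg
          · nlinarith
          · positivity
        · positivity
      exact abs_of_nonpos hle
    rw [hcongr, intervalIntegral.integral_neg, integral_w2 hw ht hYe]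
    ring
  rw [e1, e2]
  have hb1 := g0_nonneg hw ht (y := Y (c - n))
  have hb2 := g0_nonneg hw ht (y := Y (c + n))
  have hb3 : g0 wm wp t (Y c) ≤ max ((wp - wm)/2) 1 / (1 + t) := g0_le hw ht _
  linarith

end

theorem stmt_2 (wm wp : ℝ) (hw : wm < wp) (Y : ℝ → ℝ → ℝ)
    (hY : ∀ t x : ℝ, 0 ≤ t → Y t x + t * w0 wm wp (Y t x) = x) :
    (∀ q : ℝ, 1 ≤ q → ∃ C : ℝ, 0 < C ∧ ∀ t : ℝ, 0 ≤ t →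
      eLpNorm (fun x => deriv (fun y => w0 wm wp (Y t y)) x) (ENNReal.ofReal q) volume
        ≤ ENNReal.ofReal (C * (1 + t) ^ (-1 + 1/q)) ∧
      eLpNorm (fun x => deriv (deriv (fun y => w0 wm wp (Y t y))) x) (ENNReal.ofReal q) volume
        ≤ ENNReal.ofReal (C * (1 + t) ^ (-(1:ℝ)))) ∧
    (∃ C : ℝ, 0 < C ∧ ∀ t : ℝ, 0 ≤ t → ∀ x : ℝ,
      |deriv (fun y => w0 wm wp (Y t y)) x| ≤ C * (1 + t) ^ (-(1:ℝ)) ∧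
      |deriv (deriv (fun y => w0 wm wp (Y t y))) x| ≤ C * (1 + t) ^ (-(1:ℝ))) := by
  have ha : (0:ℝ) < (wp - wm)/2 := by linarith
  set K : ℝ := max ((wp - wm)/2) 1 with hKdef
  have hK1 : (1:ℝ) ≤ K := le_max_right _ _
  have hK0 : (0:ℝ) < K := by linarith
  set B : ℝ := max (wp - wm) 1 with hBdef
  have hB1 : (1:ℝ) ≤ B := le_max_right _ _
  have hwB : wp - wm ≤ B := le_max_left _ _
  set C : ℝ := K * B + 2 * K with hCdef
  have hC0 : (0:ℝ) < C := by nlinarith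
  have h2KC : 2 * K ≤ C := by nlinarith
  have hKBC : K * B ≤ C := by nlinarith
  constructor
  · intro q hq
    have hq0 : (0:ℝ) < q := by linarith
    have hiq0 : (0:ℝ) ≤ 1/q := by positivity
    have hiq1 : 1/q ≤ 1 := by rw [div_le_one hq0]; exact hq
    have hθ0 : (0:ℝ) ≤ 1 - 1/q := by linarith
    have hθ1 : 1 - 1/q ≤ 1 := by linarith
    refine ⟨C, hC0, ?_⟩
    intro t ht
    have hYe : ∀ x, Y t x + t * w0 wm wp (Y t x) = x := fun x => hY t x ht
    have h1t : (0:ℝ) < 1 + t := by linarith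
    have hd1 := deriv_w_eq hw ht hYe
    have hd2 := deriv_w1_eq hw ht hYe
    have hdpow : (0:ℝ) < (1 + t) ^ (1 - 1/q) := Real.rpow_pos_of_pos h1t _
    constructor
    · simp only [hd1]
      have hb : ∀ x, |g0 wm wp t (Y t x)| ≤ K / (1 + t) := by
        intro x
        rw [abs_of_nonneg (g0_nonneg hw ht _)]
        exact g0_le hw ht _
      have step := eLpNorm_interp _ (continuous_w1 hw ht hYe) (K / (1 + t)) (wp - wm) q
        (by positivity) (by linarith) hq hb (lint_w1 hw ht hYe)
      refine le_trans step (ENNReal.ofReal_le_ofReal ?_)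
      rw [Real.div_rpow hK0.le h1t.le]
      have e2 : C * (1 + t) ^ (-1 + 1/q) = C / (1 + t) ^ (1 - 1/q) := by
        rw [show (-1 + 1/q : ℝ) = -(1 - 1/q) by ring, Real.rpow_neg h1t.le]
        ring
      rw [e2]
      have hKθ : K ^ (1 - 1/q) ≤ K := by
        calc K ^ (1 - 1/q) ≤ K ^ (1:ℝ) := Real.rpow_le_rpow_of_exponent_le hK1 hθ1
          _ = K := Real.rpow_one K
      have hWq : (wp - wm) ^ (1/q) ≤ B := by
        calc (wp - wm) ^ (1/q) ≤ B ^ (1/q) :=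
              Real.rpow_le_rpow (by linarith) hwB hiq0
          _ ≤ B ^ (1:ℝ) := Real.rpow_le_rpow_of_exponent_le hB1 hiq1
          _ = B := Real.rpow_one B
      have hKθ0 : (0:ℝ) ≤ K ^ (1 - 1/q) := Real.rpow_nonneg hK0.le _
      have hW0 : (0:ℝ) ≤ (wp - wm) ^ (1/q) := Real.rpow_nonneg (by linarith) _
      have hnum : K ^ (1 - 1/q) * (wp - wm) ^ (1/q) ≤ C := by
        calc K ^ (1 - 1/q) * (wp - wm) ^ (1/q) ≤ K * B :=
              mul_le_mul hKθ hWq hW0 hK0.le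
          _ ≤ C := hKBC
      calc K ^ (1 - 1/q) / (1 + t) ^ (1 - 1/q) * (wp - wm) ^ (1/q)
          = K ^ (1 - 1/q) * (wp - wm) ^ (1/q) / (1 + t) ^ (1 - 1/q) := by ring
        _ ≤ C / (1 + t) ^ (1 - 1/q) := by gcongr
    · simp only [hd1, hd2]
      set M : ℝ := 2 * (K / (1 + t)) with hMdef
      have hM0 : (0:ℝ) < M := by positivity
      have hb : ∀ x, |Dg0 wm wp t (Y t x) * (DF wm wp t (Y t x))⁻¹| ≤ M :=
        fun x => abs_w2_le hw ht _
      have step := eLpNorm_interp _ (continuous_w2 hw ht hYe) M M q hM0.le hM0.le hq hb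
        (lint_w2 hw ht hYe)
      refine le_trans step (ENNReal.ofReal_le_ofReal ?_)
      have e1 : M ^ (1 - 1/q) * M ^ (1/q) = M := by
        rw [← Real.rpow_add hM0]
        norm_num
      rw [e1, Real.rpow_neg h1t.le, Real.rpow_one]
      rw [hMdef]
      rw [div_eq_mul_inv, ← mul_assoc]
      have hinv : (0:ℝ) ≤ (1 + t)⁻¹ := by positivity
      nlinarith [mul_le_mul_of_nonneg_right h2KC hinv]
  · refine ⟨C, hC0, ?_⟩
    intro t ht x
    have hYe : ∀ x, Y t x + t * w0 wm wp (Y t x) = x := fun x => hY t x ht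
    have h1t : (0:ℝ) < 1 + t := by linarith
    have hd1 := deriv_w_eq hw ht hYe
    have hd2 := deriv_w1_eq hw ht hYe
    have hinv : (0:ℝ) ≤ (1 + t)⁻¹ := by positivity
    have hKC : K / (1 + t) ≤ C * (1 + t)⁻¹ := by
      rw [div_eq_mul_inv]
      nlinarith [mul_le_mul_of_nonneg_right (show K ≤ C by nlinarith) hinv]
    have h2KC' : 2 * (K / (1 + t)) ≤ C * (1 + t)⁻¹ := by
      rw [div_eq_mul_inv, ← mul_assoc]
      nlinarith [mul_le_mul_of_nonneg_right h2KC hinv]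
    rw [Real.rpow_neg h1t.le, Real.rpow_one]
    constructor
    · simp only [hd1]
      rw [abs_of_nonneg (g0_nonneg hw ht _)]
      exact le_trans (g0_le hw ht _) hKC
    · simp only [hd1, hd2]
      exact le_trans (abs_w2_le hw ht _) h2KC'
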